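/- In the Euclidean plane ℂ, let O = 0, A = a, and B = b·exp(iπ/5), where a = 2cos(2π/5) and b = 2cos(π/5). Then the unoriented angle ∠ABO at the vertex B (between the rays from B to A and from B to O) equals π/10. (Part of Claim 1.1: T is the rational triangle (1,2,7).) -/

import Mathlib

open Real

/-- Claim 1.1 (angle at `B`): in the triangle with vertices `O = 0`, `A = a`,
`B = b·exp(iπ/5)` in `ℂ`, where `a = 2cos(2π/5)` and `b = 2cos(π/5)`, the
unoriented angle `∠ABO` at the vertex `B` equals `π/10`. -/
theorem claim_1_1_angle_at_B (a b : ℝ)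
    (ha : a = 2 * Real.cos (2 * π / 5)) (hb : b = 2 * Real.cos (π / 5)) :
    EuclideanGeometry.angle (a : ℂ)
      ((b : ℂ) * Complex.exp ((π : ℂ) * Complex.I / 5)) (0 : ℂ) = π / 10 := by
  have hpi := Real.pi_pos
  set s := Real.sin (π/5) with hs'
  set c := Real.cos (π/5) with hc'
  have hs : 0 < s := Real.sin_pos_of_pos_of_lt_pi (by positivity) (by linarith)
  have hc : 0 < c := Real.cos_pos_of_mem_Ioo ⟨by linarith, by linarith⟩
  have hsc : s^2 + c^2 = 1 := Real.sin_sq_add_cos_sq _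
  have harg : ((π:ℂ) * Complex.I / 5) = ((π/5 : ℝ) : ℂ) * Complex.I := by push_cast; ring
  have hB : Complex.exp ((π:ℂ) * Complex.I / 5) = (c : ℂ) + (s:ℂ) * Complex.I := by
    rw [harg, Complex.exp_mul_I, ← Complex.ofReal_cos, ← Complex.ofReal_sin]
  have ha2 : Real.cos (2 * π / 5) = 2*c^2 - 1 := by
    rw [hc', show 2*π/5 = 2*(π/5) by ring, Real.cos_two_mul]
  rw [hB, ha, hb, ha2]
  simp only [EuclideanGeometry.angle, InnerProductGeometry.angle, vsub_eq_sub]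
  set x : ℂ := ((2*(2*c^2-1) : ℝ) : ℂ) - ((2*c : ℝ):ℂ) * ((c:ℂ) + (s:ℂ)*Complex.I) with hx'
  set y : ℂ := (0:ℂ) - ((2*c : ℝ):ℂ) * ((c:ℂ) + (s:ℂ)*Complex.I) with hy'
  have hxe : x = ((2*c^2 - 2 : ℝ):ℂ) + ((-(2*c*s) : ℝ):ℂ) * Complex.I := by
    rw [hx']; push_cast; ring
  have hye : y = ((-(2*c^2) : ℝ):ℂ) + ((-(2*c*s) : ℝ):ℂ) * Complex.I := by
    rw [hy']; push_cast; ring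
  have hre : ∀ u v : ℝ, (((u:ℂ) + (v:ℂ) * Complex.I).re = u ∧ ((u:ℂ) + (v:ℂ) * Complex.I).im = v) := by
    intro u v
    constructor <;> simp
  have hxre : x.re = 2*c^2 - 2 := by rw [hxe]; exact (hre _ _).1
  have hxim : x.im = -(2*c*s) := by rw [hxe]; exact (hre _ _).2
  have hyre : y.re = -(2*c^2) := by rw [hye]; exact (hre _ _).1
  have hyim : y.im = -(2*c*s) := by rw [hye]; exact (hre _ _).2
  have hnx : ‖x‖ = 2*s := by
    have h1 : ‖x‖^2 = (2*s)^2 := by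
      rw [Complex.sq_norm, Complex.normSq_apply, hxre, hxim]
      nlinarith [hsc]
    rw [← Real.sqrt_sq (norm_nonneg x), h1, Real.sqrt_sq (by positivity)]
  have hny : ‖y‖ = 2*c := by
    have h1 : ‖y‖^2 = (2*c)^2 := by
      rw [Complex.sq_norm, Complex.normSq_apply, hyre, hyim]
      nlinarith [hsc]
    rw [← Real.sqrt_sq (norm_nonneg y), h1, Real.sqrt_sq (by positivity)]
  have hinner : (inner ℝ x y : ℝ) = 8*s^2*c^2 := by
    rw [Complex.inner]
    simp [Complex.mul_re, hxre, hxim, hyre, hyim]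
    nlinarith [hsc]
  rw [hinner, hnx, hny]
  have hratio : 8*s^2*c^2 / (2*s*(2*c)) = Real.cos (π/10) := by
    rw [show (π/10 : ℝ) = π/2 - 2*(π/5) by ring, Real.cos_pi_div_two_sub, Real.sin_two_mul,
      ← hs', ← hc']
    field_simp
    ring
  rw [hratio]
  exact Real.arccos_cos (by positivity) (by linarith)
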